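/- Any two maps of the form (x,y) ↦ (x² + b00·x + b01·y, y² + b10·x + b11·y) and (x,y) ↦ (x² + b̃00·x + b̃01·y, y² + b̃10·x + b̃11·y), with all eight coefficients nonzero, are A-equivalent via affine diffeomorphisms: there exist an affine diffeomorphism h of the source of the form h(x,y) = (β00·x + β01, β10·y + β11) with β00·β10 ≠ 0 and an affine diffeomorphism H of the target (a diagonal linear scaling composed with a translation) such that the second map equals H composed with the first map composed with h. -/

import Mathlib

lemma exists_cube_root (K : ℝ) : ∃ c : ℝ, c ^ 3 = K := by
  rcases le_or_gt 0 K with hK | hK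
  · exact ⟨K ^ ((3:ℕ)⁻¹ : ℝ), Real.rpow_inv_natCast_pow hK (by norm_num)⟩
  · refine ⟨-((-K) ^ ((3:ℕ)⁻¹ : ℝ)), ?_⟩
    have := Real.rpow_inv_natCast_pow (x := -K) (by linarith) (n := 3) (by norm_num)
    nlinarith [this]

/-- Any two maps `(x,y) ↦ (x² + b00x + b01y, y² + b10x + b11y)` and
`(x,y) ↦ (x² + b̃00x + b̃01y, y² + b̃10x + b̃11y)` with all eight coefficients nonzero are
A-equivalent via affine diffeomorphisms: a source change `h(x,y) = (β00x + β01, β10y + β11)`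
with `β00β10 ≠ 0` and a target change which is a diagonal linear scaling followed by a
translation. -/
theorem quadratic_normal_forms_affinely_equivalent
    (b00 b01 b10 b11 tb00 tb01 tb10 tb11 : ℝ)
    (h0 : b00 ≠ 0) (h1 : b01 ≠ 0) (h2 : b10 ≠ 0) (h3 : b11 ≠ 0)
    (h4 : tb00 ≠ 0) (h5 : tb01 ≠ 0) (h6 : tb10 ≠ 0) (h7 : tb11 ≠ 0) :
    ∃ β00 β01 β10 β11 s0 s1 t0 t1 : ℝ,
      β00 ≠ 0 ∧ β10 ≠ 0 ∧ s0 ≠ 0 ∧ s1 ≠ 0 ∧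
      ∀ x y : ℝ,
        ((x ^ 2 + tb00 * x + tb01 * y, y ^ 2 + tb10 * x + tb11 * y) : ℝ × ℝ) =
        (s0 * ((β00 * x + β01) ^ 2 + b00 * (β00 * x + β01) + b01 * (β10 * y + β11)) + t0,
         s1 * ((β10 * y + β11) ^ 2 + b10 * (β00 * x + β01) + b11 * (β10 * y + β11)) + t1) := by
  obtain ⟨c, hc⟩ := exists_cube_root (b10 * b01 ^ 2 / (tb10 * tb01 ^ 2))
  have hKne : b10 * b01 ^ 2 / (tb10 * tb01 ^ 2) ≠ 0 :=
    div_ne_zero (mul_ne_zero h2 (pow_ne_zero _ h1)) (mul_ne_zero h6 (pow_ne_zero _ h5))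
  have hc0 : c ≠ 0 := fun h => hKne (by rw [← hc, h]; ring)
  have hK : c ^ 3 * (tb10 * tb01 ^ 2) = b10 * b01 ^ 2 := by
    rw [hc]; field_simp
  have hβ10ne : tb01 * c ^ 2 / b01 ≠ 0 :=
    div_ne_zero (mul_ne_zero h5 (pow_ne_zero _ hc0)) h1
  refine ⟨c, (tb00 * c - b00) / 2, tb01 * c ^ 2 / b01,
    (tb11 * (tb01 * c ^ 2 / b01) - b11) / 2, 1 / c ^ 2, 1 / (tb01 * c ^ 2 / b01) ^ 2,
    -(1 / c ^ 2) * (((tb00 * c - b00) / 2) ^ 2 + b00 * ((tb00 * c - b00) / 2)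
      + b01 * ((tb11 * (tb01 * c ^ 2 / b01) - b11) / 2)),
    -(1 / (tb01 * c ^ 2 / b01) ^ 2) * (((tb11 * (tb01 * c ^ 2 / b01) - b11) / 2) ^ 2
      + b10 * ((tb00 * c - b00) / 2)
      + b11 * ((tb11 * (tb01 * c ^ 2 / b01) - b11) / 2)),
    hc0, hβ10ne, one_div_ne_zero (pow_ne_zero _ hc0), one_div_ne_zero (pow_ne_zero _ hβ10ne),
    ?_⟩
  intro x y
  simp only [Prod.mk.injEq]
  constructor
  · field_simp
    ring
  · field_simp
    linear_combination (4 * x * c) * hK
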